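/- Let Ω ⊆ ℝ² be an open set with coordinates (u,v). Let ρ, ρ* : Ω → ℝ be positive differentiable functions and n = (n₁,n₂,n₃), n* = (n₁*,n₂*,n₃*) : Ω → ℝ³ be differentiable maps with |n| = |n*| = 1, n₃ < 0 and n₃* < 0 on Ω. Set m = ρ·(1, n₁, n₂, n₃) : Ω → ℝ⁴ and m* = ρ*·(1, n₁*, n₂*, n₃*), and suppose m* = A m on Ω for some scaled Lorentz transformation A. Assume both normal fields are integrable: ∂_v(n₁/n₃) = ∂_u(n₂/n₃) and ∂_v(n₁*/n₃*) = ∂_u(n₂*/n₃*) on Ω. Assume the surface is non-degenerate: the 11 functions c^{i,j}_u for 1 ≤ i < j ≤ 4 together with c^{i,j}_v for (i,j) ∈ {(1,2),(1,3),(1,4),(2,3),(3,4)}, formed from the components of m, are linearly independent over ℝ as real-valued functions on Ω. Then A = α·diag(1, λ, λ, 1) for some α > 0 and λ ∈ {−1, 1}. -/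

import Mathlib

/-- The Minkowski quadratic form on ℝ⁴: q(t,x,y,z) = x² + y² + z² − t². -/
def mink (x : Fin 4 → ℝ) : ℝ := (x 1)^2 + (x 2)^2 + (x 3)^2 - (x 0)^2

/-- A real 4×4 matrix is a Lorentz transformation if it preserves the Minkowski form. -/
def IsLorentz (A : Matrix (Fin 4) (Fin 4) ℝ) : Prop :=
  ∀ x : Fin 4 → ℝ, mink (A.mulVec x) = mink x

/-- A scaled Lorentz transformation: a nonzero multiple of a Lorentz transformation. -/
def IsScaledLorentz (A : Matrix (Fin 4) (Fin 4) ℝ) : Prop :=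
  ∃ s : ℝ, s ≠ 0 ∧ ∃ B : Matrix (Fin 4) (Fin 4) ℝ, IsLorentz B ∧ A = s • B

/-- Partial derivative with respect to the first coordinate u. -/
noncomputable def pu (g : ℝ × ℝ → ℝ) (x : ℝ × ℝ) : ℝ := fderiv ℝ g x (1, 0)

/-- Partial derivative with respect to the second coordinate v. -/
noncomputable def pv (g : ℝ × ℝ → ℝ) (x : ℝ × ℝ) : ℝ := fderiv ℝ g x (0, 1)

/-- c^{i,j}_k = c_j·∂_k c_i − c_i·∂_k c_j, where d is the partial derivative ∂_k. -/
noncomputable def cmin (d : (ℝ × ℝ → ℝ) → ℝ × ℝ → ℝ) (c : Fin 4 → ℝ × ℝ → ℝ)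
    (i j : Fin 4) (x : ℝ × ℝ) : ℝ :=
  c j x * d (c i) x - c i x * d (c j) x

open Filter in
lemma fderiv_div_apply' (f g : ℝ × ℝ → ℝ) (x w : ℝ × ℝ)
    (hf : DifferentiableAt ℝ f x) (hg : DifferentiableAt ℝ g x) (hgx : g x ≠ 0) :
    fderiv ℝ (fun y => f y / g y) x w
      = (g x * fderiv ℝ f x w - f x * fderiv ℝ g x w) / (g x)^2 := by
  have hq : DifferentiableAt ℝ (fun y => f y / g y) x := by
    simp only [div_eq_mul_inv]
    exact hf.mul (hg.inv hgx)
  have hev : (fun y => f y / g y * g y) =ᶠ[nhds x] f := by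
    filter_upwards [hg.continuousAt.eventually_ne hgx] with y hy
    field_simp
  have h1 : fderiv ℝ f x = fderiv ℝ (fun y => f y / g y * g y) x := (hev.fderiv_eq).symm
  rw [fderiv_fun_mul hq hg] at h1
  have h2 : fderiv ℝ f x w = (f x / g x) * fderiv ℝ g x w
      + g x * fderiv ℝ (fun y => f y / g y) x w := by
    rw [h1]; simp [smul_eq_mul]
  field_simp at h2 ⊢
  linarith [h2]

open Filter in
lemma quot_deriv (Ω : Set (ℝ × ℝ)) (hΩ : IsOpen Ω) (f g F G : ℝ × ℝ → ℝ)
    (x : ℝ × ℝ) (hx : x ∈ Ω) (w : ℝ × ℝ)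
    (hFd : DifferentiableAt ℝ F x) (hGd : DifferentiableAt ℝ G x) (hGx : G x ≠ 0)
    (heq : ∀ y ∈ Ω, f y / g y = F y / G y) :
    fderiv ℝ (fun y => f y / g y) x w
      = (G x * fderiv ℝ F x w - F x * fderiv ℝ G x w) / (G x)^2 := by
  have hev : (fun y => f y / g y) =ᶠ[nhds x] (fun y => F y / G y) := by
    filter_upwards [hΩ.mem_nhds hx] with y hy using heq y hy
  rw [hev.fderiv_eq]
  exact fderiv_div_apply' F G x w hFd hGd hGx

lemma fderiv_lin4 (c0 c1 c2 c3 : ℝ) (f0 f1 f2 f3 : ℝ × ℝ → ℝ) (x w : ℝ × ℝ)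
    (h0 : DifferentiableAt ℝ f0 x) (h1 : DifferentiableAt ℝ f1 x)
    (h2 : DifferentiableAt ℝ f2 x) (h3 : DifferentiableAt ℝ f3 x) :
    fderiv ℝ (fun y => c0 * f0 y + c1 * f1 y + c2 * f2 y + c3 * f3 y) x w
      = c0 * fderiv ℝ f0 x w + c1 * fderiv ℝ f1 x w + c2 * fderiv ℝ f2 x w
        + c3 * fderiv ℝ f3 x w := by
  have h := (((((h0.hasFDerivAt.const_mul c0).add (h1.hasFDerivAt.const_mul c1)).add
      (h2.hasFDerivAt.const_mul c2)).add (h3.hasFDerivAt.const_mul c3))).fderiv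
  rw [show (fun y => c0 * f0 y + c1 * f1 y + c2 * f2 y + c3 * f3 y) = ((((fun y => c0 * f0 y) + fun y => c1 * f1 y) + fun y => c2 * f2 y) + fun y => c3 * f3 y) from rfl, h]
  simp [smul_eq_mul]

lemma det_fin_four' (A : Matrix (Fin 4) (Fin 4) ℝ) :
    A.det =
      A 0 0 * (A 1 1 * (A 2 2 * A 3 3 - A 2 3 * A 3 2) - A 1 2 * (A 2 1 * A 3 3 - A 2 3 * A 3 1)
        + A 1 3 * (A 2 1 * A 3 2 - A 2 2 * A 3 1))
      - A 0 1 * (A 1 0 * (A 2 2 * A 3 3 - A 2 3 * A 3 2) - A 1 2 * (A 2 0 * A 3 3 - A 2 3 * A 3 0)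
        + A 1 3 * (A 2 0 * A 3 2 - A 2 2 * A 3 0))
      + A 0 2 * (A 1 0 * (A 2 1 * A 3 3 - A 2 3 * A 3 1) - A 1 1 * (A 2 0 * A 3 3 - A 2 3 * A 3 0)
        + A 1 3 * (A 2 0 * A 3 1 - A 2 1 * A 3 0))
      - A 0 3 * (A 1 0 * (A 2 1 * A 3 2 - A 2 2 * A 3 1) - A 1 1 * (A 2 0 * A 3 2 - A 2 2 * A 3 0)
        + A 1 2 * (A 2 0 * A 3 1 - A 2 1 * A 3 0)) := by
  simp [Matrix.det_succ_row_zero, Fin.sum_univ_succ,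
    show ((2 : Fin 3).succ : Fin 4) = 3 from rfl,
    show (Fin.succAbove (1 : Fin 4) 2 : Fin 4) = 3 from rfl,
    show (Fin.succAbove (2 : Fin 4) 2 : Fin 4) = 3 from rfl,
    show (Fin.castSucc (2 : Fin 3) : Fin 4) = 2 from rfl,
    show (Fin.succAbove (3 : Fin 4) 2 : Fin 4) = 2 from rfl]
  ring

set_option maxHeartbeats 1600000 in
theorem orthographic_uniqueness
    (Ω : Set (ℝ × ℝ)) (hΩ : IsOpen Ω)
    (ρ ρs n1 n2 n3 n1s n2s n3s : ℝ × ℝ → ℝ)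
    (hρ : ∀ x ∈ Ω, DifferentiableAt ℝ ρ x) (hρs : ∀ x ∈ Ω, DifferentiableAt ℝ ρs x)
    (hρpos : ∀ x ∈ Ω, 0 < ρ x) (hρspos : ∀ x ∈ Ω, 0 < ρs x)
    (hn1 : ∀ x ∈ Ω, DifferentiableAt ℝ n1 x) (hn2 : ∀ x ∈ Ω, DifferentiableAt ℝ n2 x)
    (hn3 : ∀ x ∈ Ω, DifferentiableAt ℝ n3 x)
    (hn1s : ∀ x ∈ Ω, DifferentiableAt ℝ n1s x) (hn2s : ∀ x ∈ Ω, DifferentiableAt ℝ n2s x)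
    (hn3s : ∀ x ∈ Ω, DifferentiableAt ℝ n3s x)
    (hunit : ∀ x ∈ Ω, (n1 x)^2 + (n2 x)^2 + (n3 x)^2 = 1)
    (hunits : ∀ x ∈ Ω, (n1s x)^2 + (n2s x)^2 + (n3s x)^2 = 1)
    (hn3neg : ∀ x ∈ Ω, n3 x < 0) (hn3sneg : ∀ x ∈ Ω, n3s x < 0)
    (m mstar : Fin 4 → ℝ × ℝ → ℝ)
    (hm : m = ![ρ, fun x => ρ x * n1 x, fun x => ρ x * n2 x, fun x => ρ x * n3 x])
    (hms : mstar = ![ρs, fun x => ρs x * n1s x, fun x => ρs x * n2s x,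
      fun x => ρs x * n3s x])
    (A : Matrix (Fin 4) (Fin 4) ℝ) (hA : IsScaledLorentz A)
    (hrel : ∀ x ∈ Ω, ∀ i : Fin 4, mstar i x = ∑ j : Fin 4, A i j * m j x)
    (hint : ∀ x ∈ Ω,
      pv (fun y => n1 y / n3 y) x = pu (fun y => n2 y / n3 y) x)
    (hints : ∀ x ∈ Ω,
      pv (fun y => n1s y / n3s y) x = pu (fun y => n2s y / n3s y) x)
    (hnondeg : LinearIndependent ℝ
      (fun (k : Fin 11) (x : Ω) =>
        (![cmin pu m 0 1, cmin pu m 0 2, cmin pu m 0 3,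
           cmin pu m 1 2, cmin pu m 1 3, cmin pu m 2 3,
           cmin pv m 0 1, cmin pv m 0 2, cmin pv m 0 3,
           cmin pv m 1 2, cmin pv m 2 3] k) (x : ℝ × ℝ))) :
    ∃ α : ℝ, 0 < α ∧ ∃ l : ℝ, (l = 1 ∨ l = -1) ∧
      A = α • Matrix.diagonal ![1, l, l, 1] := by
  obtain ⟨s, hs, B, hB, hAB⟩ := hA
  -- components of m and mstar
  have hm0 : m 0 = ρ := by rw [hm]; rfl
  have hm1 : m 1 = fun y => ρ y * n1 y := by rw [hm]; rfl
  have hm2 : m 2 = fun y => ρ y * n2 y := by rw [hm]; rfl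
  have hm3 : m 3 = fun y => ρ y * n3 y := by rw [hm]; rfl
  have hms0 : mstar 0 = ρs := by rw [hms]; rfl
  have hms1 : mstar 1 = fun y => ρs y * n1s y := by rw [hms]; rfl
  have hms2 : mstar 2 = fun y => ρs y * n2s y := by rw [hms]; rfl
  have hms3 : mstar 3 = fun y => ρs y * n3s y := by rw [hms]; rfl
  -- differentiability
  have hdm : ∀ x ∈ Ω, ∀ i : Fin 4, DifferentiableAt ℝ (m i) x := by
    intro x hx i
    fin_cases i
    · show DifferentiableAt ℝ (m 0) x
      rw [hm0]; exact hρ x hx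
    · show DifferentiableAt ℝ (m 1) x
      rw [hm1]; exact (hρ x hx).mul (hn1 x hx)
    · show DifferentiableAt ℝ (m 2) x
      rw [hm2]; exact (hρ x hx).mul (hn2 x hx)
    · show DifferentiableAt ℝ (m 3) x
      rw [hm3]; exact (hρ x hx).mul (hn3 x hx)
  have hdms : ∀ x ∈ Ω, ∀ i : Fin 4, DifferentiableAt ℝ (mstar i) x := by
    intro x hx i
    fin_cases i
    · show DifferentiableAt ℝ (mstar 0) x
      rw [hms0]; exact hρs x hx
    · show DifferentiableAt ℝ (mstar 1) x
      rw [hms1]; exact (hρs x hx).mul (hn1s x hx)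
    · show DifferentiableAt ℝ (mstar 2) x
      rw [hms2]; exact (hρs x hx).mul (hn2s x hx)
    · show DifferentiableAt ℝ (mstar 3) x
      rw [hms3]; exact (hρs x hx).mul (hn3s x hx)
  have hm3ne : ∀ x ∈ Ω, m 3 x ≠ 0 := by
    intro x hx
    rw [hm3]
    exact mul_ne_zero (ne_of_gt (hρpos x hx)) (ne_of_lt (hn3neg x hx))
  have hms3ne : ∀ x ∈ Ω, mstar 3 x ≠ 0 := by
    intro x hx
    rw [hms3]
    exact mul_ne_zero (ne_of_gt (hρspos x hx)) (ne_of_lt (hn3sneg x hx))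
  -- integrability in cmin form
  have hE : ∀ x ∈ Ω, cmin pv m 1 3 x = cmin pu m 2 3 x := by
    intro x hx
    have hc : ((m 3 x)^2 : ℝ) ≠ 0 := pow_ne_zero 2 (hm3ne x hx)
    have q1 := quot_deriv Ω hΩ n1 n3 (m 1) (m 3) x hx (0,1)
      (hdm x hx 1) (hdm x hx 3) (hm3ne x hx)
      (fun y hy => by
        rw [hm1, hm3]
        exact (mul_div_mul_left (n1 y) (n3 y) (ne_of_gt (hρpos y hy))).symm)
    have q2 := quot_deriv Ω hΩ n2 n3 (m 2) (m 3) x hx (1,0)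
      (hdm x hx 2) (hdm x hx 3) (hm3ne x hx)
      (fun y hy => by
        rw [hm2, hm3]
        exact (mul_div_mul_left (n2 y) (n3 y) (ne_of_gt (hρpos y hy))).symm)
    have h := hint x hx
    simp only [pu, pv] at h
    rw [q1, q2] at h
    rw [div_eq_div_iff hc hc] at h
    have h' := mul_right_cancel₀ hc h
    simp only [cmin, pu, pv]
    linarith [h']
  have hEs : ∀ x ∈ Ω, cmin pv mstar 1 3 x = cmin pu mstar 2 3 x := by
    intro x hx
    have hc : ((mstar 3 x)^2 : ℝ) ≠ 0 := pow_ne_zero 2 (hms3ne x hx)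
    have q1 := quot_deriv Ω hΩ n1s n3s (mstar 1) (mstar 3) x hx (0,1)
      (hdms x hx 1) (hdms x hx 3) (hms3ne x hx)
      (fun y hy => by
        rw [hms1, hms3]
        exact (mul_div_mul_left (n1s y) (n3s y) (ne_of_gt (hρspos y hy))).symm)
    have q2 := quot_deriv Ω hΩ n2s n3s (mstar 2) (mstar 3) x hx (1,0)
      (hdms x hx 2) (hdms x hx 3) (hms3ne x hx)
      (fun y hy => by
        rw [hms2, hms3]
        exact (mul_div_mul_left (n2s y) (n3s y) (ne_of_gt (hρspos y hy))).symm)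
    have h := hints x hx
    simp only [pu, pv] at h
    rw [q1, q2] at h
    rw [div_eq_div_iff hc hc] at h
    have h' := mul_right_cancel₀ hc h
    simp only [cmin, pu, pv]
    linarith [h']
  -- derivatives of mstar via A
  have hpd : ∀ x ∈ Ω, ∀ i : Fin 4, ∀ w : ℝ × ℝ,
      fderiv ℝ (mstar i) x w
        = A i 0 * fderiv ℝ (m 0) x w + A i 1 * fderiv ℝ (m 1) x w
          + A i 2 * fderiv ℝ (m 2) x w + A i 3 * fderiv ℝ (m 3) x w := by
    intro x hx i w
    have hev : mstar i =ᶠ[nhds x]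
        (fun y => A i 0 * m 0 y + A i 1 * m 1 y + A i 2 * m 2 y + A i 3 * m 3 y) := by
      filter_upwards [hΩ.mem_nhds hx] with y hy
      simpa [Fin.sum_univ_four] using hrel y hy i
    rw [hev.fderiv_eq, fderiv_lin4 (A i 0) (A i 1) (A i 2) (A i 3) (m 0) (m 1) (m 2) (m 3)
      x w (hdm x hx 0) (hdm x hx 1) (hdm x hx 2) (hdm x hx 3)]
  -- the key linear relation
  have key := Fintype.linearIndependent_iff.mp hnondeg
    ![-(A 2 0 * A 3 1 - A 2 1 * A 3 0), -(A 2 0 * A 3 2 - A 2 2 * A 3 0),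
      -(A 2 0 * A 3 3 - A 2 3 * A 3 0), -(A 2 1 * A 3 2 - A 2 2 * A 3 1),
      -(A 2 1 * A 3 3 - A 2 3 * A 3 1),
      (A 1 1 * A 3 3 - A 1 3 * A 3 1) - (A 2 2 * A 3 3 - A 2 3 * A 3 2),
      A 1 0 * A 3 1 - A 1 1 * A 3 0, A 1 0 * A 3 2 - A 1 2 * A 3 0,
      A 1 0 * A 3 3 - A 1 3 * A 3 0, A 1 1 * A 3 2 - A 1 2 * A 3 1,
      A 1 2 * A 3 3 - A 1 3 * A 3 2]
    (by
      funext z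
      obtain ⟨x, hx⟩ := z
      have hEx := hE x hx
      have hEsx := hEs x hx
      have hr1 := hrel x hx 1
      have hr2 := hrel x hx 2
      have hr3 := hrel x hx 3
      rw [Fin.sum_univ_four] at hr1 hr2 hr3
      have hd1v := hpd x hx 1 (0,1)
      have hd3v := hpd x hx 3 (0,1)
      have hd2u := hpd x hx 2 (1,0)
      have hd3u := hpd x hx 3 (1,0)
      simp only [cmin, pu, pv] at hEx hEsx
      rw [hr1, hr2, hr3, hd1v, hd3v, hd2u, hd3u] at hEsx
      simp only [Finset.sum_apply, Pi.smul_apply, Pi.zero_apply, smul_eq_mul,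
        Fin.sum_univ_succ, Fin.sum_univ_zero, Matrix.cons_val_zero, Matrix.cons_val_succ,
        cmin, pu, pv]
      linear_combination hEsx - (A 1 1 * A 3 3 - A 1 3 * A 3 1) * hEx)
  -- extract the eleven coefficient equations
  have hc0 : -(A 2 0 * A 3 1 - A 2 1 * A 3 0) = 0 := key 0
  have hc1 : -(A 2 0 * A 3 2 - A 2 2 * A 3 0) = 0 := key 1
  have hc2 : -(A 2 0 * A 3 3 - A 2 3 * A 3 0) = 0 := key 2
  have hc3 : -(A 2 1 * A 3 2 - A 2 2 * A 3 1) = 0 := key 3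
  have hc4 : -(A 2 1 * A 3 3 - A 2 3 * A 3 1) = 0 := key 4
  have hc5 : (A 1 1 * A 3 3 - A 1 3 * A 3 1) - (A 2 2 * A 3 3 - A 2 3 * A 3 2) = 0 := key 5
  have hc6 : A 1 0 * A 3 1 - A 1 1 * A 3 0 = 0 := key 6
  have hc7 : A 1 0 * A 3 2 - A 1 2 * A 3 0 = 0 := key 7
  have hc8 : A 1 0 * A 3 3 - A 1 3 * A 3 0 = 0 := key 8
  have hc9 : A 1 1 * A 3 2 - A 1 2 * A 3 1 = 0 := key 9
  have hc10 : A 1 2 * A 3 3 - A 1 3 * A 3 2 = 0 := key 10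
  -- Lorentz scalar equations for A
  have hABe : ∀ i j, A i j = s * B i j := by
    intro i j; rw [hAB]; simp
  have q0 := hB ![1,0,0,0]
  have q1 := hB ![0,1,0,0]
  have q2 := hB ![0,0,1,0]
  have q3 := hB ![0,0,0,1]
  have q01 := hB ![1,1,0,0]
  have q02 := hB ![1,0,1,0]
  have q03 := hB ![1,0,0,1]
  have q12 := hB ![0,1,1,0]
  have q13 := hB ![0,1,0,1]
  have q23 := hB ![0,0,1,1]
  simp [mink, Matrix.mulVec, dotProduct, Fin.sum_univ_four]
    at q0 q1 q2 q3 q01 q02 q03 q12 q13 q23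
  have e00 : -A 0 0 * A 0 0 + A 1 0 * A 1 0 + A 2 0 * A 2 0 + A 3 0 * A 3 0 = -s^2 := by
    simp only [hABe]; linear_combination (s^2) * q0
  have e11 : -A 0 1 * A 0 1 + A 1 1 * A 1 1 + A 2 1 * A 2 1 + A 3 1 * A 3 1 = s^2 := by
    simp only [hABe]; linear_combination (s^2) * q1
  have e22 : -A 0 2 * A 0 2 + A 1 2 * A 1 2 + A 2 2 * A 2 2 + A 3 2 * A 3 2 = s^2 := by
    simp only [hABe]; linear_combination (s^2) * q2
  have e33 : -A 0 3 * A 0 3 + A 1 3 * A 1 3 + A 2 3 * A 2 3 + A 3 3 * A 3 3 = s^2 := by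
    simp only [hABe]; linear_combination (s^2) * q3
  have e01 : -A 0 0 * A 0 1 + A 1 0 * A 1 1 + A 2 0 * A 2 1 + A 3 0 * A 3 1 = 0 := by
    simp only [hABe]; linear_combination (s^2/2) * q01 - (s^2/2) * q0 - (s^2/2) * q1
  have e02 : -A 0 0 * A 0 2 + A 1 0 * A 1 2 + A 2 0 * A 2 2 + A 3 0 * A 3 2 = 0 := by
    simp only [hABe]; linear_combination (s^2/2) * q02 - (s^2/2) * q0 - (s^2/2) * q2
  have e03 : -A 0 0 * A 0 3 + A 1 0 * A 1 3 + A 2 0 * A 2 3 + A 3 0 * A 3 3 = 0 := by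
    simp only [hABe]; linear_combination (s^2/2) * q03 - (s^2/2) * q0 - (s^2/2) * q3
  have e12 : -A 0 1 * A 0 2 + A 1 1 * A 1 2 + A 2 1 * A 2 2 + A 3 1 * A 3 2 = 0 := by
    simp only [hABe]; linear_combination (s^2/2) * q12 - (s^2/2) * q1 - (s^2/2) * q2
  have e13 : -A 0 1 * A 0 3 + A 1 1 * A 1 3 + A 2 1 * A 2 3 + A 3 1 * A 3 3 = 0 := by
    simp only [hABe]; linear_combination (s^2/2) * q13 - (s^2/2) * q1 - (s^2/2) * q3
  have e23 : -A 0 2 * A 0 3 + A 1 2 * A 1 3 + A 2 2 * A 2 3 + A 3 2 * A 3 3 = 0 := by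
    simp only [hABe]; linear_combination (s^2/2) * q23 - (s^2/2) * q2 - (s^2/2) * q3
  -- determinant nonzero
  have hJ : A.transpose * Matrix.diagonal ![(-1:ℝ),1,1,1] * A
      = (s^2) • Matrix.diagonal ![(-1:ℝ),1,1,1] := by
    ext i j
    fin_cases i <;> fin_cases j <;>
      simp [Matrix.mul_apply, Fin.sum_univ_four, Matrix.diagonal] <;> linarith
  have hdet : A.det ≠ 0 := by
    have hd := congrArg Matrix.det hJ
    rw [Matrix.det_mul, Matrix.det_mul, Matrix.det_transpose, Matrix.det_smul,
      Matrix.det_diagonal] at hd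
    simp [Fin.prod_univ_four] at hd
    intro h
    rw [h] at hd
    simp at hd
    exact absurd hd (by positivity)
  -- μ ≠ 0
  have hlap : A.det = (A 1 1 * A 3 3 - A 1 3 * A 3 1) * (A 0 0 * A 2 2 - A 0 2 * A 2 0) := by
    rw [det_fin_four']
    linear_combination (-(A 0 2 * A 2 3 - A 0 3 * A 2 2)) * hc6
      + (A 0 1 * A 2 3 - A 0 3 * A 2 1) * hc7
      + (-(A 0 1 * A 2 2 - A 0 2 * A 2 1)) * hc8
      + (-(A 0 0 * A 2 3 - A 0 3 * A 2 0)) * hc9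
      + (-(A 0 0 * A 2 1 - A 0 1 * A 2 0)) * hc10
  have hmu : A 1 1 * A 3 3 - A 1 3 * A 3 1 ≠ 0 := by
    intro h
    rw [hlap, h, zero_mul] at hdet
    exact hdet rfl
  have hmu2 : A 2 2 * A 3 3 - A 2 3 * A 3 2 ≠ 0 := by
    intro h
    apply hmu
    linarith [hc5]
  -- vanishing entries
  have z30 : A 3 0 = 0 := by
    have h : (A 1 1 * A 3 3 - A 1 3 * A 3 1) * A 3 0 = 0 := by
      linear_combination (A 3 1) * hc8 - (A 3 3) * hc6
    exact (mul_eq_zero.mp h).resolve_left hmu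
  have z10 : A 1 0 = 0 := by
    have h : (A 1 1 * A 3 3 - A 1 3 * A 3 1) * A 1 0 = 0 := by
      linear_combination (A 1 1) * hc8 - (A 1 3) * hc6
    exact (mul_eq_zero.mp h).resolve_left hmu
  have z32 : A 3 2 = 0 := by
    have h : (A 1 1 * A 3 3 - A 1 3 * A 3 1) * A 3 2 = 0 := by
      linear_combination (A 3 3) * hc9 + (A 3 1) * hc10
    exact (mul_eq_zero.mp h).resolve_left hmu
  have z12 : A 1 2 = 0 := by
    have h : (A 1 1 * A 3 3 - A 1 3 * A 3 1) * A 1 2 = 0 := by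
      linear_combination (A 1 3) * hc9 + (A 1 1) * hc10
    exact (mul_eq_zero.mp h).resolve_left hmu
  have z31 : A 3 1 = 0 := by
    have h : (A 2 2 * A 3 3 - A 2 3 * A 3 2) * A 3 1 = 0 := by
      linear_combination (A 3 3) * hc3 - (A 3 2) * hc4
    exact (mul_eq_zero.mp h).resolve_left hmu2
  have z20 : A 2 0 = 0 := by
    have h : (A 2 2 * A 3 3 - A 2 3 * A 3 2) * A 2 0 = 0 := by
      linear_combination (-(A 2 2)) * hc2 + (A 2 3) * hc1
    exact (mul_eq_zero.mp h).resolve_left hmu2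
  have z21 : A 2 1 = 0 := by
    have h : (A 2 2 * A 3 3 - A 2 3 * A 3 2) * A 2 1 = 0 := by
      linear_combination (-(A 2 2)) * hc4 + (A 2 3) * hc3
    exact (mul_eq_zero.mp h).resolve_left hmu2
  -- a33 ≠ 0, a11 ≠ 0, a22 = a11
  have hmu' : A 1 1 * A 3 3 ≠ 0 := by
    intro h; apply hmu; rw [z31]; linarith [h]
  have ha11 : A 1 1 ≠ 0 := fun h => hmu' (by rw [h, zero_mul])
  have ha33 : A 3 3 ≠ 0 := fun h => hmu' (by rw [h, mul_zero])
  have h2211 : A 2 2 = A 1 1 := by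
    have h : (A 2 2 - A 1 1) * A 3 3 = 0 := by
      linear_combination -hc5 - (A 1 3) * z31 + (A 2 3) * z32
    rcases mul_eq_zero.mp h with h | h
    · linarith
    · exact absurd h ha33
  -- row 0 via Lorentz
  have hs2 : s^2 ≠ 0 := pow_ne_zero 2 hs
  have ha00sq : A 0 0 * A 0 0 = s^2 := by
    rw [z10, z20, z30] at e00; linarith
  have ha00 : A 0 0 ≠ 0 := by
    intro h; rw [h, mul_zero] at ha00sq; exact hs2 ha00sq.symm
  have z01 : A 0 1 = 0 := by
    rw [z10, z20, z30] at e01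
    have h : A 0 0 * A 0 1 = 0 := by linarith
    exact (mul_eq_zero.mp h).resolve_left ha00
  have z02 : A 0 2 = 0 := by
    rw [z10, z20, z30] at e02
    have h : A 0 0 * A 0 2 = 0 := by linarith
    exact (mul_eq_zero.mp h).resolve_left ha00
  have z03 : A 0 3 = 0 := by
    rw [z10, z20, z30] at e03
    have h : A 0 0 * A 0 3 = 0 := by linarith
    exact (mul_eq_zero.mp h).resolve_left ha00
  have ha11sq : A 1 1 * A 1 1 = s^2 := by
    rw [z01, z21, z31] at e11; linarith
  have z13 : A 1 3 = 0 := by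
    rw [z01, z03, z21, z31] at e13
    have h : A 1 1 * A 1 3 = 0 := by linarith
    exact (mul_eq_zero.mp h).resolve_left ha11
  have z23 : A 2 3 = 0 := by
    rw [z02, z03, z12, z13, z32] at e23
    have h : A 2 2 * A 2 3 = 0 := by linarith
    have ha22 : A 2 2 ≠ 0 := by rw [h2211]; exact ha11
    exact (mul_eq_zero.mp h).resolve_left ha22
  have ha33sq : A 3 3 * A 3 3 = s^2 := by
    rw [z03, z13, z23] at e33; linarith
  -- positivity from a point of Ω
  have hne : Nonempty Ω := by
    by_contra h
    apply hnondeg.ne_zero 0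
    funext z
    exact (h ⟨z⟩).elim
  obtain ⟨⟨x0, hx0⟩⟩ := hne
  have hr0 := hrel x0 hx0 0
  have hr3 := hrel x0 hx0 3
  rw [Fin.sum_univ_four] at hr0 hr3
  rw [hm0, hm1, hm2, hm3, hms0] at hr0
  rw [hm0, hm1, hm2, hm3, hms3] at hr3
  simp only [z01, z02, z03, z30, z31, z32, zero_mul, mul_zero, add_zero, zero_add] at hr0 hr3
  -- hr0 : ρs x0 = A 0 0 * ρ x0 + 0 + 0 + 0 ; hr3 : ρs x0 * n3s x0 = ... + A 3 3 * (ρ x0 * n3 x0)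
  have hρ0 := hρpos x0 hx0
  have hρs0 := hρspos x0 hx0
  have hn30 := hn3neg x0 hx0
  have hn3s0 := hn3sneg x0 hx0
  have ha00pos : 0 < A 0 0 := by
    have h : A 0 0 = ρs x0 / ρ x0 := by
      rw [eq_div_iff (ne_of_gt hρ0)]
      linarith [hr0]
    rw [h]
    exact div_pos hρs0 hρ0
  have ha33pos : 0 < A 3 3 := by
    have hnum : ρs x0 * n3s x0 < 0 := mul_neg_of_pos_of_neg hρs0 hn3s0
    have hden : ρ x0 * n3 x0 < 0 := mul_neg_of_pos_of_neg hρ0 hn30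
    have h : A 3 3 = (ρs x0 * n3s x0) / (ρ x0 * n3 x0) := by
      rw [eq_div_iff (ne_of_lt hden)]
      linarith [hr3]
    rw [h]
    exact div_pos_of_neg_of_neg hnum hden
  have h0033 : A 0 0 = A 3 3 := by
    have hf : (A 0 0 - A 3 3) * (A 0 0 + A 3 3) = 0 := by
      linear_combination ha00sq - ha33sq
    rcases mul_eq_zero.mp hf with h | h
    · linarith
    · linarith
  refine ⟨A 0 0, ha00pos, ?_⟩
  have hfact : (A 1 1 - A 0 0) * (A 1 1 + A 0 0) = 0 := by
    linear_combination ha11sq - ha00sq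
  rcases mul_eq_zero.mp hfact with h | h
  · refine ⟨1, Or.inl rfl, ?_⟩
    have h11 : A 1 1 = A 0 0 := by linarith
    ext i j
    fin_cases i <;> fin_cases j <;>
      simp [Matrix.diagonal, z01, z02, z03, z10, z12, z13, z20, z21, z23, z30, z31, z32,
        h11, h2211, h0033] <;> linarith
  · refine ⟨-1, Or.inr rfl, ?_⟩
    have h11 : A 1 1 = -A 0 0 := by linarith
    ext i j
    fin_cases i <;> fin_cases j <;>
      simp [Matrix.diagonal, z01, z02, z03, z10, z12, z13, z20, z21, z23, z30, z31, z32,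
        h11, h2211, h0033] <;> linarith
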